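/- arXiv:1808.04515 — 3 statements merged into one kernel-verified Lean document; each statement's English description precedes it below -/
import Mathlib

section
/- For every L ∈ ℝ^{n×k} and R ∈ ℝ^{m×k}, the nuclear norm of the product satisfies ‖L Rᵀ‖_* ≤ (1/2)(‖L‖_F² + ‖R‖_F²). -/
open Matrix
open scoped RealInnerProductSpace

/-- Frobenius norm of a real matrix. -/
noncomputable def frobNorm {n m : ℕ} (X : Matrix (Fin n) (Fin m) ℝ) : ℝ :=
  Real.sqrt (∑ i, ∑ j, (X i j) ^ 2)

/-- Nuclear norm of a real matrix: the sum of its singular values, i.e. the square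
roots of the eigenvalues of the positive semidefinite matrix `Xᵀ X` (over `ℝ`,
`Xᴴ = Xᵀ`). -/
noncomputable def nucNorm {n m : ℕ} (X : Matrix (Fin n) (Fin m) ℝ) : ℝ :=
  ∑ j, Real.sqrt ((show (Xᵀ * X).IsHermitian by
    simpa using Matrix.isHermitian_conjTranspose_mul_self X).eigenvalues j)

/-- For every `L ∈ ℝ^{n×k}` and `R ∈ ℝ^{m×k}`,
`‖L Rᵀ‖_* ≤ (1/2)(‖L‖_F² + ‖R‖_F²)`. -/
theorem nucNorm_mul_transpose_le (n m k : ℕ)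
    (L : Matrix (Fin n) (Fin k) ℝ) (R : Matrix (Fin m) (Fin k) ℝ) :
    nucNorm (L * Rᵀ) ≤ (1 / 2) * (frobNorm L ^ 2 + frobNorm R ^ 2) := by
  classical
  set A : Matrix (Fin n) (Fin m) ℝ := L * Rᵀ with hAdef
  have hB : (Aᴴ * A).IsHermitian := Matrix.isHermitian_conjTranspose_mul_self A
  set b := hB.eigenvectorBasis with hbdef
  set μ : Fin m → ℝ := hB.eigenvalues with hμdef
  -- inner products are dot products
  have hinnm : ∀ x y : EuclideanSpace ℝ (Fin m), ⟪x, y⟫ = (⇑x) ⬝ᵥ (⇑y) := by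
    intro x y; simp [PiLp.inner_apply, dotProduct, mul_comm]
  have hinnn : ∀ x y : EuclideanSpace ℝ (Fin n), ⟪x, y⟫ = (⇑x) ⬝ᵥ (⇑y) := by
    intro x y; simp [PiLp.inner_apply, dotProduct, mul_comm]
  -- orthonormality of eigenvectors as dot products
  have hvv : ∀ i j : Fin m, (⇑(b i)) ⬝ᵥ (⇑(b j)) = if i = j then 1 else 0 := by
    intro i j
    have h := b.orthonormal
    rw [orthonormal_iff_ite] at h
    have := h i j
    rw [hinnm] at this
    simpa using this
  -- dot products of images A *ᵥ (b i)
  have hAv : ∀ i j : Fin m,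
      (A *ᵥ ⇑(b i)) ⬝ᵥ (A *ᵥ ⇑(b j)) = μ j * (if i = j then 1 else 0) := by
    intro i j
    have h := hB.mulVec_eigenvectorBasis j
    have hAH : Aᴴ = Aᵀ := by simp
    have key : (⇑(b i)) ⬝ᵥ ((Aᴴ * A) *ᵥ ⇑(b j)) = (A *ᵥ ⇑(b i)) ⬝ᵥ (A *ᵥ ⇑(b j)) :=
      calc (⇑(b i)) ⬝ᵥ ((Aᴴ * A) *ᵥ ⇑(b j))
          = ((⇑(b i)) ᵥ* (Aᴴ * A)) ⬝ᵥ (⇑(b j)) := Matrix.dotProduct_mulVec _ _ _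
        _ = (((⇑(b i)) ᵥ* Aᴴ) ᵥ* A) ⬝ᵥ (⇑(b j)) := by rw [Matrix.vecMul_vecMul]
        _ = ((A *ᵥ ⇑(b i)) ᵥ* A) ⬝ᵥ (⇑(b j)) := by rw [hAH, Matrix.vecMul_transpose]
        _ = (A *ᵥ ⇑(b i)) ⬝ᵥ (A *ᵥ ⇑(b j)) := (Matrix.dotProduct_mulVec _ _ _).symm
    rw [← key, h, dotProduct_smul, smul_eq_mul, hvv]
  have hμ0 : ∀ j, 0 ≤ μ j := by
    intro j
    have h : (A *ᵥ ⇑(b j)) ⬝ᵥ (A *ᵥ ⇑(b j)) = μ j := by simpa using hAv j j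
    rw [← h]
    exact Finset.sum_nonneg fun i _ => mul_self_nonneg _
  -- w j = Rᵀ *ᵥ b j, q j = ‖w j‖²
  set w : Fin m → Fin k → ℝ := fun j => Rᵀ *ᵥ ⇑(b j) with hwdef
  set q : Fin m → ℝ := fun j => (w j) ⬝ᵥ (w j) with hqdef
  have hq0 : ∀ j, 0 ≤ q j :=
    fun j => Finset.sum_nonneg fun i _ => mul_self_nonneg _
  have hAvw : ∀ j, A *ᵥ ⇑(b j) = L *ᵥ (w j) := by
    intro j; rw [hAdef, ← Matrix.mulVec_mulVec]
  -- normalized left singular vectors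
  set u : Fin m → EuclideanSpace ℝ (Fin n) :=
    fun j => (Real.sqrt (μ j))⁻¹ • (WithLp.equiv 2 (Fin n → ℝ)).symm (A *ᵥ ⇑(b j)) with hudef
  have hucoe : ∀ j, (⇑(u j) : Fin n → ℝ) = (Real.sqrt (μ j))⁻¹ • (A *ᵥ ⇑(b j)) := by
    intro j; simp [hudef]
  have huu : ∀ i j : Fin m, ⟪u i, u j⟫ =
      (Real.sqrt (μ i))⁻¹ * ((Real.sqrt (μ j))⁻¹ * (μ j * (if i = j then 1 else 0))) := by
    intro i j
    rw [hinnn, hucoe, hucoe, smul_dotProduct, dotProduct_smul, hAv,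
      smul_eq_mul, smul_eq_mul]
  have hsqrt_ne : ∀ j : Fin m, μ j ≠ 0 → Real.sqrt (μ j) ≠ 0 := by
    intro j hj
    exact Real.sqrt_ne_zero'.mpr (lt_of_le_of_ne (hμ0 j) (Ne.symm hj))
  have hu_on : Orthonormal ℝ (fun j : {j : Fin m // μ j ≠ 0} => u j) := by
    rw [orthonormal_iff_ite]
    rintro ⟨i, hi⟩ ⟨j, hj⟩
    rw [huu i j]
    by_cases hij : i = j
    · subst hij
      simp only [if_pos rfl, Subtype.mk.injEq, mul_one]
      have hs := hsqrt_ne i hi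
      have h2 : μ i = Real.sqrt (μ i) * Real.sqrt (μ i) := (Real.mul_self_sqrt (hμ0 i)).symm
      rw [h2]
      field_simp
      rw [Real.sqrt_sq (Real.sqrt_nonneg _)]
    · simp [hij, Subtype.mk.injEq]
  -- columns of L as Euclidean vectors
  set Lcol : Fin k → EuclideanSpace ℝ (Fin n) :=
    fun c => (WithLp.equiv 2 (Fin n → ℝ)).symm (fun i => L i c) with hLcoldef
  set g : Fin m → ℝ := fun j => ∑ c, (⟪u j, Lcol c⟫) ^ 2 with hgdef
  -- pointwise bound for nonzero eigenvalues
  have hpoint : ∀ j : Fin m, μ j ≠ 0 →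
      Real.sqrt (μ j) ≤ (1 / 2) * (g j + q j) := by
    intro j hj
    have hs := hsqrt_ne j hj
    have hAvv : (A *ᵥ ⇑(b j)) ⬝ᵥ (A *ᵥ ⇑(b j)) = μ j := by simpa using hAv j j
    have h1 : (⇑(u j)) ⬝ᵥ (A *ᵥ ⇑(b j)) = Real.sqrt (μ j) := by
      rw [hucoe, smul_dotProduct, hAvv, smul_eq_mul]
      field_simp
      rw [Real.sq_sqrt (hμ0 j)]
    have h2 : (⇑(u j)) ⬝ᵥ (A *ᵥ ⇑(b j)) = ∑ c, ⟪u j, Lcol c⟫ * (w j c) := by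
      rw [hAvw, Matrix.dotProduct_mulVec]
      refine Finset.sum_congr rfl fun c _ => ?_
      have hc : ⟪u j, Lcol c⟫ = (⇑(u j)) ⬝ᵥ (fun i => L i c) := by
        rw [hinnn]
        simp [hLcoldef]
      rw [hc]
      simp [Matrix.vecMul, dotProduct]
    have hkey : Real.sqrt (μ j) = ∑ c, ⟪u j, Lcol c⟫ * (w j c) := by rw [← h1, h2]
    rw [hkey]
    calc (∑ c, ⟪u j, Lcol c⟫ * (w j c))
        ≤ ∑ c, (1 / 2) * ((⟪u j, Lcol c⟫) ^ 2 + (w j c) * (w j c)) := by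
          refine Finset.sum_le_sum fun c _ => ?_
          nlinarith [sq_nonneg (⟪u j, Lcol c⟫ - w j c)]
      _ = (1 / 2) * ((∑ c, (⟪u j, Lcol c⟫) ^ 2) + ∑ c, (w j c) * (w j c)) := by
          rw [← Finset.mul_sum, Finset.sum_add_distrib]
      _ = (1 / 2) * (g j + q j) := rfl
  -- Bessel: ∑ over nonzero eigenvalues of g ≤ ‖L‖_F²
  have hbessel : ∑ j, (if μ j = 0 then 0 else g j) ≤ frobNorm L ^ 2 := by
    have hfrobL : frobNorm L ^ 2 = ∑ c, ∑ i, (L i c) ^ 2 := by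
      rw [frobNorm, Real.sq_sqrt
        (by positivity)]
      exact Finset.sum_comm
    have hsub : ∑ j, (if μ j = 0 then 0 else g j)
        = ∑ j : {j : Fin m // μ j ≠ 0}, g ↑j := by
      rw [← Finset.sum_subtype (Finset.univ.filter fun j => μ j ≠ 0)
        (fun j => by simp) g]
      rw [Finset.sum_filter]
      refine Finset.sum_congr rfl fun j _ => ?_
      by_cases h : μ j = 0 <;> simp [h]
    have hLnorm : ∀ c, ‖Lcol c‖ ^ 2 = ∑ i, (L i c) ^ 2 := by
      intro c
      rw [← real_inner_self_eq_norm_sq, hinnn]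
      simp [dotProduct, hLcoldef, sq]
    rw [hsub, hfrobL]
    calc ∑ j : {j : Fin m // μ j ≠ 0}, g ↑j
        = ∑ c, ∑ j : {j : Fin m // μ j ≠ 0}, (⟪u ↑j, Lcol c⟫) ^ 2 := by
          rw [hgdef]; exact Finset.sum_comm
      _ ≤ ∑ c, ∑ i, (L i c) ^ 2 := by
          refine Finset.sum_le_sum fun c _ => ?_
          rw [← hLnorm c]
          have hbes := hu_on.sum_inner_products_le (Lcol c) (s := Finset.univ)
          calc ∑ j : {j : Fin m // μ j ≠ 0}, (⟪u ↑j, Lcol c⟫) ^ 2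
              = ∑ j : {j : Fin m // μ j ≠ 0}, ‖⟪u ↑j, Lcol c⟫‖ ^ 2 := by
                refine Finset.sum_congr rfl fun j _ => ?_
                rw [Real.norm_eq_abs, sq_abs]
            _ ≤ ‖Lcol c‖ ^ 2 := hbes
  -- Parseval: ∑ q = ‖R‖_F²
  have hparseval : ∑ j, q j = frobNorm R ^ 2 := by
    have hfrobR : frobNorm R ^ 2 = ∑ c, ∑ i, (R i c) ^ 2 := by
      rw [frobNorm, Real.sq_sqrt
        (by positivity)]
      exact Finset.sum_comm
    set Rcol : Fin k → EuclideanSpace ℝ (Fin m) :=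
      fun c => (WithLp.equiv 2 (Fin m → ℝ)).symm (fun i => R i c) with hRcoldef
    have hwc : ∀ (j : Fin m) (c : Fin k), w j c = ⟪Rcol c, b j⟫ := by
      intro j c
      rw [hinnm]
      simp [hwdef, Matrix.mulVec, dotProduct, hRcoldef, Matrix.transpose_apply]
    calc ∑ j, q j = ∑ j, ∑ c, ⟪Rcol c, b j⟫ * ⟪b j, Rcol c⟫ := by
          refine Finset.sum_congr rfl fun j _ => ?_
          rw [hqdef]
          simp only [dotProduct]
          refine Finset.sum_congr rfl fun c _ => ?_
          rw [hwc j c, real_inner_comm (b j) (Rcol c)]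
      _ = ∑ c, ⟪Rcol c, Rcol c⟫ := by
          rw [Finset.sum_comm]
          exact Finset.sum_congr rfl fun c _ => b.sum_inner_mul_inner _ _
      _ = ∑ c, ∑ i, (R i c) ^ 2 := by
          refine Finset.sum_congr rfl fun c _ => ?_
          rw [hinnm]
          simp [dotProduct, hRcoldef, sq]
      _ = frobNorm R ^ 2 := hfrobR.symm
  -- assemble
  have hnuc : nucNorm A = ∑ j, Real.sqrt (μ j) := rfl
  rw [hnuc]
  calc ∑ j, Real.sqrt (μ j)
      ≤ ∑ j, (1 / 2) * ((if μ j = 0 then 0 else g j) + q j) := by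
        refine Finset.sum_le_sum fun j _ => ?_
        by_cases h : μ j = 0
        · rw [if_pos h, h, Real.sqrt_zero]
          have := hq0 j
          linarith
        · rw [if_neg h]
          exact hpoint j h
    _ = (1 / 2) * ((∑ j, (if μ j = 0 then 0 else g j)) + ∑ j, q j) := by
        rw [← Finset.mul_sum, Finset.sum_add_distrib]
    _ ≤ (1 / 2) * (frobNorm L ^ 2 + frobNorm R ^ 2) := by
        rw [hparseval]
        linarith [hbessel]
end

section
/- Let L ∈ ℝ^{p×N}, A ∈ ℝ^{q×N}, b ∈ ℝ^q, d ∈ ℝ^N, γ > 0, η > 0, and for λ ≥ 0 set w(λ) = M(λ)^{-1}((1/η)d + λAᵀb) with M(λ) = (1/γ)LᵀL + (1/η)I + λAᵀA. Then the data-misfit function λ ↦ ‖A w(λ) − b‖₂ is nonincreasing on [0,∞): for all 0 ≤ λ₁ ≤ λ₂ one has ‖A w(λ₂) − b‖₂ ≤ ‖A w(λ₁) − b‖₂. -/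
open Matrix

/-- Euclidean (l²) norm on `ℝ^q`. -/
noncomputable def l2 {q : ℕ} (v : Fin q → ℝ) : ℝ :=
  Real.sqrt (∑ i, (v i) ^ 2)

/-- `M(λ) = (1/γ) LᵀL + (1/η) I + λ AᵀA`. -/
noncomputable def Mmat {p q N : ℕ} (L : Matrix (Fin p) (Fin N) ℝ)
    (A : Matrix (Fin q) (Fin N) ℝ) (γ η lam : ℝ) : Matrix (Fin N) (Fin N) ℝ :=
  (1 / γ) • (Lᵀ * L) + (1 / η) • (1 : Matrix (Fin N) (Fin N) ℝ) + lam • (Aᵀ * A)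

section Aux

variable {p q N : ℕ} (L : Matrix (Fin p) (Fin N) ℝ) (A : Matrix (Fin q) (Fin N) ℝ)

lemma dot_self_nonneg {m : Type*} [Fintype m] (v : m → ℝ) : 0 ≤ v ⬝ᵥ v :=
  Finset.sum_nonneg fun _ _ => mul_self_nonneg _

lemma dot_Mmat (γ η lam : ℝ) (v w : Fin N → ℝ) :
    v ⬝ᵥ (Mmat L A γ η lam).mulVec w
      = (1/γ) * ((L.mulVec v) ⬝ᵥ (L.mulVec w)) + (1/η) * (v ⬝ᵥ w)
        + lam * ((A.mulVec v) ⬝ᵥ (A.mulVec w)) := by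
  simp [Mmat, Matrix.add_mulVec, Matrix.smul_mulVec, ← Matrix.mulVec_mulVec,
    dotProduct_add, dotProduct_smul, Matrix.one_mulVec,
    Matrix.dotProduct_mulVec, Matrix.vecMul_transpose, smul_eq_mul]

lemma Mmat_symm (γ η lam : ℝ) (v w : Fin N → ℝ) :
    v ⬝ᵥ (Mmat L A γ η lam).mulVec w = w ⬝ᵥ (Mmat L A γ η lam).mulVec v := by
  rw [dot_Mmat, dot_Mmat, dotProduct_comm (L.mulVec v), dotProduct_comm v,
    dotProduct_comm (A.mulVec v)]

lemma Mmat_posdef (γ η lam : ℝ) (hγ : 0 < γ) (hη : 0 < η) (hlam : 0 ≤ lam) :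
    (Mmat L A γ η lam).PosDef := by
  rw [Matrix.posDef_iff_dotProduct_mulVec]
  constructor
  · show (Mmat L A γ η lam)ᴴ = Mmat L A γ η lam
    simp [Mmat, Matrix.conjTranspose_eq_transpose_of_trivial, Matrix.transpose_add,
      Matrix.transpose_smul, Matrix.transpose_mul, Matrix.transpose_transpose,
      Matrix.transpose_one]
  · intro x hx
    have hx' : (0:ℝ) < x ⬝ᵥ x := by
      rcases lt_or_eq_of_le (dot_self_nonneg x) with h | h
      · exact h
      · exact absurd (dotProduct_self_eq_zero.mp h.symm) hx
    have : (0:ℝ) < x ⬝ᵥ (Mmat L A γ η lam).mulVec x := by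
      rw [dot_Mmat]
      have h1 : 0 ≤ (1/γ) * ((L.mulVec x) ⬝ᵥ (L.mulVec x)) :=
        mul_nonneg (by positivity) (dot_self_nonneg _)
      have h2 : 0 < (1/η) * (x ⬝ᵥ x) := mul_pos (by positivity) hx'
      have h3 : 0 ≤ lam * ((A.mulVec x) ⬝ᵥ (A.mulVec x)) :=
        mul_nonneg hlam (dot_self_nonneg _)
      linarith
    simpa using this

/-- quadratic objective value identity: the solution minimizes the Tikhonov functional. -/
lemma key_min (γ η lam : ℝ) (hγ : 0 < γ) (hη : 0 < η) (hlam : 0 ≤ lam)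
    (b : Fin q → ℝ) (d : Fin N → ℝ) (w : Fin N → ℝ) :
    let c := (1/η) • d + lam • Aᵀ.mulVec b
    let wl := (Mmat L A γ η lam)⁻¹.mulVec c
    let Φ : (Fin N → ℝ) → ℝ := fun v =>
      (1/γ) * ((L.mulVec v) ⬝ᵥ (L.mulVec v)) + (1/η) * (v ⬝ᵥ v) - 2 * ((1/η) * (v ⬝ᵥ d))
    let f : (Fin N → ℝ) → ℝ := fun v => (A.mulVec v - b) ⬝ᵥ (A.mulVec v - b)
    Φ wl + lam * f wl ≤ Φ w + lam * f w := by
  intro c wl Φ f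
  set M := Mmat L A γ η lam with hM
  have hdet : IsUnit M.det :=
    isUnit_iff_ne_zero.mpr (ne_of_gt (Mmat_posdef L A γ η lam hγ hη hlam).det_pos)
  have hMwl : M.mulVec wl = c := by
    show M.mulVec (M⁻¹.mulVec c) = c
    rw [Matrix.mulVec_mulVec, Matrix.mul_nonsing_inv M hdet, Matrix.one_mulVec]
  -- expansion lemma: for all v, Φ v + lam * f v = v⬝Mv − 2 v⬝c + lam (b⬝b)
  have hexp : ∀ v : Fin N → ℝ,
      Φ v + lam * f v = v ⬝ᵥ M.mulVec v - 2 * (v ⬝ᵥ c) + lam * (b ⬝ᵥ b) := by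
    intro v
    have hvc : v ⬝ᵥ c = (1/η) * (v ⬝ᵥ d) + lam * ((A.mulVec v) ⬝ᵥ b) := by
      simp [c, dotProduct_add, dotProduct_smul, smul_eq_mul,
        Matrix.dotProduct_mulVec, Matrix.vecMul_transpose]
    have hf : f v = (A.mulVec v) ⬝ᵥ (A.mulVec v) - 2 * ((A.mulVec v) ⬝ᵥ b) + b ⬝ᵥ b := by
      simp only [f, dotProduct_sub, sub_dotProduct]
      rw [dotProduct_comm b (A.mulVec v)]
      ring
    rw [hvc, hf, dot_Mmat]
    simp only [Φ]
    ring
  have hdiff : (Φ w + lam * f w) - (Φ wl + lam * f wl)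
      = (w - wl) ⬝ᵥ M.mulVec (w - wl) := by
    rw [hexp w, hexp wl]
    rw [Matrix.mulVec_sub, dotProduct_sub, sub_dotProduct,
      sub_dotProduct]
    rw [← hMwl]
    rw [Mmat_symm L A γ η lam wl w]
    ring
  have hpos : 0 ≤ (w - wl) ⬝ᵥ M.mulVec (w - wl) := by
    rw [dot_Mmat]
    have h1 := dot_self_nonneg (L.mulVec (w - wl))
    have h2 := dot_self_nonneg (w - wl)
    have h3 := dot_self_nonneg (A.mulVec (w - wl))
    have : 0 ≤ lam * ((A.mulVec (w - wl)) ⬝ᵥ (A.mulVec (w - wl))) := mul_nonneg hlam h3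
    have hγ' : (0:ℝ) ≤ 1/γ := by positivity
    have hη' : (0:ℝ) ≤ 1/η := by positivity
    nlinarith
  linarith [hdiff ▸ hpos]

end Aux

/-- The data-misfit `λ ↦ ‖A w(λ) − b‖₂` is nonincreasing on `[0, ∞)`, where
`w(λ) = M(λ)⁻¹((1/η)d + λAᵀb)`. -/
theorem misfit_antitone (p q N : ℕ)
    (L : Matrix (Fin p) (Fin N) ℝ) (A : Matrix (Fin q) (Fin N) ℝ)
    (b : Fin q → ℝ) (d : Fin N → ℝ) (γ η : ℝ) (hγ : 0 < γ) (hη : 0 < η) :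
    ∀ lam₁ lam₂ : ℝ, 0 ≤ lam₁ → lam₁ ≤ lam₂ →
      l2 (A.mulVec ((Mmat L A γ η lam₂)⁻¹.mulVec ((1 / η) • d + lam₂ • Aᵀ.mulVec b)) - b) ≤
        l2 (A.mulVec ((Mmat L A γ η lam₁)⁻¹.mulVec ((1 / η) • d + lam₁ • Aᵀ.mulVec b)) - b) := by
  intro lam₁ lam₂ h1 h12
  rcases eq_or_lt_of_le h12 with rfl | hlt
  · exact le_refl _
  have h2 : 0 ≤ lam₂ := le_of_lt (lt_of_le_of_lt h1 hlt)
  set w₁ := (Mmat L A γ η lam₁)⁻¹.mulVec ((1 / η) • d + lam₁ • Aᵀ.mulVec b) with hw1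
  set w₂ := (Mmat L A γ η lam₂)⁻¹.mulVec ((1 / η) • d + lam₂ • Aᵀ.mulVec b) with hw2
  set Φ : (Fin N → ℝ) → ℝ := fun v =>
    (1/γ) * ((L.mulVec v) ⬝ᵥ (L.mulVec v)) + (1/η) * (v ⬝ᵥ v) - 2 * ((1/η) * (v ⬝ᵥ d)) with hΦ
  set f : (Fin N → ℝ) → ℝ := fun v => (A.mulVec v - b) ⬝ᵥ (A.mulVec v - b) with hf
  have k1 : Φ w₁ + lam₁ * f w₁ ≤ Φ w₂ + lam₁ * f w₂ :=
    key_min L A γ η lam₁ hγ hη h1 b d w₂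
  have k2 : Φ w₂ + lam₂ * f w₂ ≤ Φ w₁ + lam₂ * f w₁ :=
    key_min L A γ η lam₂ hγ hη h2 b d w₁
  have hff : f w₂ ≤ f w₁ := by
    have : (lam₂ - lam₁) * (f w₂ - f w₁) ≤ 0 := by linarith
    nlinarith [sub_pos.mpr hlt]
  -- translate to l2
  have hl2 : ∀ v : Fin q → ℝ, l2 v = Real.sqrt (v ⬝ᵥ v) := by
    intro v
    unfold l2
    congr 1
    exact Finset.sum_congr rfl fun i _ => sq (v i) ▸ (pow_two (v i))
  rw [hl2, hl2]
  exact Real.sqrt_le_sqrt hff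
end

section
/- Let G ∈ ℝ^{n×m} have a singular value decomposition G = U Σ Vᵀ, where U ∈ ℝ^{n×n} and V ∈ ℝ^{m×m} are orthogonal and Σ ∈ ℝ^{n×m} has Σ_{ij} = 0 for i ≠ j and Σ_{ii} = σ_i ≥ 0. For α > 0 define the soft-thresholded matrix S_α(Σ) by S_α(Σ)_{ii} = max(σ_i − α, 0) and S_α(Σ)_{ij} = 0 for i ≠ j. Then X* = U S_α(Σ) Vᵀ is the unique global minimizer over ℝ^{n×m} of the function X ↦ (1/2)‖X − G‖_F² + α‖X‖_*. -/
open Matrix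

namespace SVTAux

/-! ### Inner product on matrices -/

noncomputable def ip {n m : ℕ} (A B : Matrix (Fin n) (Fin m) ℝ) : ℝ :=
  ∑ i, ∑ j, A i j * B i j

lemma ip_trace {n m : ℕ} (A B : Matrix (Fin n) (Fin m) ℝ) :
    ip A B = Matrix.trace (Aᵀ * B) := by
  simp only [ip, Matrix.trace, Matrix.diag_apply, Matrix.mul_apply, Matrix.transpose_apply]
  rw [Finset.sum_comm]

lemma ip_mul_orth {n m : ℕ} (A B : Matrix (Fin n) (Fin m) ℝ) (Q : Matrix (Fin m) (Fin m) ℝ)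
    (hQ : Q * Qᵀ = 1) : ip (A * Q) (B * Q) = ip A B := by
  rw [ip_trace, ip_trace, Matrix.transpose_mul, Matrix.trace_mul_comm]
  rw [show B * Q * (Qᵀ * Aᵀ) = B * (Q * Qᵀ) * Aᵀ by
    simp only [Matrix.mul_assoc]]
  rw [hQ, Matrix.mul_one, Matrix.trace_mul_comm]

lemma ip_conj {n m : ℕ} (A B : Matrix (Fin n) (Fin m) ℝ)
    (U : Matrix (Fin n) (Fin n) ℝ) (V : Matrix (Fin m) (Fin m) ℝ)
    (hU₁ : Uᵀ * U = 1) (hV₁ : Vᵀ * V = 1) :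
    ip (U * A * Vᵀ) (U * B * Vᵀ) = ip A B := by
  rw [ip_trace, ip_trace]
  have h1 : (U * A * Vᵀ)ᵀ * (U * B * Vᵀ) = V * (Aᵀ * B) * Vᵀ := by
    simp only [Matrix.transpose_mul, Matrix.transpose_transpose]
    calc Vᵀᵀ * (Aᵀ * Uᵀ) * (U * B * Vᵀ) = V * (Aᵀ * ((Uᵀ * U) * (B * Vᵀ))) := by
          rw [Matrix.transpose_transpose]; simp only [Matrix.mul_assoc]
      _ = V * (Aᵀ * B) * Vᵀ := by rw [hU₁, Matrix.one_mul]; simp only [Matrix.mul_assoc]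
  rw [h1, Matrix.trace_mul_cycle, ← Matrix.mul_assoc, hV₁, Matrix.one_mul]

lemma frob_sq {n m : ℕ} (A : Matrix (Fin n) (Fin m) ℝ) : frobNorm A ^ 2 = ip A A := by
  rw [frobNorm, Real.sq_sqrt (by positivity)]
  simp [ip, sq]

lemma l2_nonneg {q : ℕ} (v : Fin q → ℝ) : 0 ≤ l2 v := Real.sqrt_nonneg _

lemma dot_self_sq {q : ℕ} (v : Fin q → ℝ) : v ⬝ᵥ v = ∑ i, (v i) ^ 2 := by
  simp [dotProduct, sq]

lemma dot_mulVec_orth {q : ℕ} (U : Matrix (Fin q) (Fin q) ℝ) (hU : Uᵀ * U = 1)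
    (a b : Fin q → ℝ) : (U *ᵥ a) ⬝ᵥ (U *ᵥ b) = a ⬝ᵥ b := by
  rw [Matrix.dotProduct_mulVec, ← Matrix.vecMul_transpose, Matrix.vecMul_vecMul, hU,
    Matrix.vecMul_one]

lemma l2_mulVec_orth {q : ℕ} (U : Matrix (Fin q) (Fin q) ℝ) (hU : Uᵀ * U = 1)
    (a : Fin q → ℝ) : l2 (U *ᵥ a) = l2 a := by
  rw [l2, l2, ← dot_self_sq, ← dot_self_sq, dot_mulVec_orth U hU]

lemma dot_le_l2 {q : ℕ} (a b : Fin q → ℝ) : a ⬝ᵥ b ≤ l2 a * l2 b := by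
  have h := Finset.sum_mul_sq_le_sq_mul_sq Finset.univ a b
  have h2 : a ⬝ᵥ b ≤ |a ⬝ᵥ b| := le_abs_self _
  refine h2.trans ?_
  rw [← Real.sqrt_sq_eq_abs, l2, l2, ← Real.sqrt_mul (by positivity)]
  exact Real.sqrt_le_sqrt (by simpa [dotProduct] using h)

lemma mulVec_self_dot {n m : ℕ} (X : Matrix (Fin n) (Fin m) ℝ) (v : Fin m → ℝ) :
    (X *ᵥ v) ⬝ᵥ (X *ᵥ v) = v ⬝ᵥ ((Xᵀ * X) *ᵥ v) := by
  rw [Matrix.dotProduct_mulVec, Matrix.vecMul_mulVec, Matrix.dotProduct_mulVec]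

/-! ### Index-collapsing lemmas for rectangular diagonal matrices -/

lemma collapse₁ {n m : ℕ} (j : Fin m) (f : Fin n → ℝ) :
    (∑ i : Fin n, if (i : ℕ) = (j : ℕ) then f i else 0)
      = if h : (j : ℕ) < n then f ⟨j, h⟩ else 0 := by
  split_ifs with h
  · rw [Finset.sum_eq_single ⟨(j : ℕ), h⟩]
    · simp
    · intro b _ hb
      rw [if_neg]
      intro hc
      exact hb (Fin.ext hc)
    · simp
  · apply Finset.sum_eq_zero
    intro i _
    rw [if_neg]
    intro hc
    exact h (hc ▸ i.isLt)

lemma collapse₂ {n m : ℕ} (i : Fin n) (f : Fin m → ℝ) :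
    (∑ j : Fin m, if (i : ℕ) = (j : ℕ) then f j else 0)
      = if h : (i : ℕ) < m then f ⟨i, h⟩ else 0 := by
  split_ifs with h
  · rw [Finset.sum_eq_single ⟨(i : ℕ), h⟩]
    · simp
    · intro b _ hb
      rw [if_neg]
      intro hc
      exact hb (Fin.ext hc.symm)
    · simp
  · apply Finset.sum_eq_zero
    intro j _
    rw [if_neg]
    intro hc
    exact h (hc ▸ j.isLt)

lemma sum_fin_le {a b : ℕ} (g : ℕ → ℝ) (hg0 : ∀ x, 0 ≤ g x) (hgb : ∀ x, b ≤ x → g x = 0) :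
    ∑ i : Fin a, g i ≤ ∑ j : Fin b, g j := by
  rw [Fin.sum_univ_eq_sum_range, Fin.sum_univ_eq_sum_range]
  have h1 : ∑ x ∈ Finset.range a, g x ≤ ∑ x ∈ Finset.range (max a b), g x :=
    Finset.sum_le_sum_of_subset_of_nonneg
      (Finset.range_subset_range.2 (le_max_left a b)) (fun x _ _ => hg0 x)
  have h2 : ∑ x ∈ Finset.range b, g x = ∑ x ∈ Finset.range (max a b), g x := by
    apply Finset.sum_subset (Finset.range_subset_range.2 (le_max_right a b))
    intro x _ hx
    exact hgb x (by simpa using hx)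
  rw [h2]; exact h1

/-- A rectangular-diagonal matrix with diagonal entries bounded by `α` in absolute
value is an `α`-contraction in the `l2` norm. -/
lemma diagish_contract {n m : ℕ} (M : Matrix (Fin n) (Fin m) ℝ) (α : ℝ) (hα : 0 ≤ α)
    (hoff : ∀ (i : Fin n) (j : Fin m), (i : ℕ) ≠ (j : ℕ) → M i j = 0)
    (hbd : ∀ (i : Fin n) (j : Fin m), (i : ℕ) = (j : ℕ) → (M i j) ^ 2 ≤ α ^ 2)
    (w : Fin m → ℝ) : l2 (M *ᵥ w) ≤ α * l2 w := by
  set g : ℕ → ℝ := fun x =>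
    if h1 : x < n then (if h2 : x < m then (M ⟨x, h1⟩ ⟨x, h2⟩ * w ⟨x, h2⟩) ^ 2 else 0) else 0
    with hg
  have hg0 : ∀ x, 0 ≤ g x := by
    intro x; rw [hg]; dsimp only; split_ifs <;> positivity
  have hgm : ∀ x, m ≤ x → g x = 0 := by
    intro x hx; rw [hg]; dsimp only
    split_ifs with h1 h2
    · omega
    · rfl
    · rfl
  have hstep : ∀ i : Fin n, ((M *ᵥ w) i) ^ 2 = g i := by
    intro i
    have hmv : (M *ᵥ w) i = if h : (i : ℕ) < m then M i ⟨i, h⟩ * w ⟨i, h⟩ else 0 := by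
      rw [show (M *ᵥ w) i = ∑ j, M i j * w j from rfl,
        ← collapse₂ i (fun j => M i j * w j)]
      apply Finset.sum_congr rfl
      intro j _
      split_ifs with h
      · rfl
      · rw [hoff i j h, zero_mul]
    rw [hmv, hg]; dsimp only
    rw [dif_pos i.isLt]
    split_ifs with h
    · rfl
    · norm_num
  have key : ∑ i, ((M *ᵥ w) i) ^ 2 ≤ α ^ 2 * ∑ j, (w j) ^ 2 := by
    calc ∑ i, ((M *ᵥ w) i) ^ 2 = ∑ i : Fin n, g i := Finset.sum_congr rfl fun i _ => hstep i
      _ ≤ ∑ j : Fin m, g j := sum_fin_le g hg0 hgm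
      _ ≤ ∑ j : Fin m, α ^ 2 * (w j) ^ 2 := by
          apply Finset.sum_le_sum
          intro j _
          rw [hg]; dsimp only
          split_ifs with h1 h2
          · rw [mul_pow]
            have := hbd ⟨j, h1⟩ ⟨(j : ℕ), h2⟩ rfl
            have hj : (⟨(j : ℕ), h2⟩ : Fin m) = j := by apply Fin.ext; rfl
            rw [hj] at this ⊢
            exact mul_le_mul_of_nonneg_right this (sq_nonneg _)
          · exact absurd j.isLt h2
          · positivity
      _ = α ^ 2 * ∑ j, (w j) ^ 2 := by rw [Finset.mul_sum]
  rw [l2, l2]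
  calc Real.sqrt (∑ i, ((M *ᵥ w) i) ^ 2) ≤ Real.sqrt (α ^ 2 * ∑ j, (w j) ^ 2) :=
        Real.sqrt_le_sqrt key
    _ = α * Real.sqrt (∑ j, (w j) ^ 2) := by
        rw [Real.sqrt_mul (by positivity), Real.sqrt_sq hα]

/-! ### Spectral representation of `ip` -/

lemma star_eq_transpose {q : ℕ} (M : Matrix (Fin q) (Fin q) ℝ) : star M = Mᵀ := by
  ext i j; simp [Matrix.star_apply]

lemma ip_eq_sum_cols {n m : ℕ} (W X : Matrix (Fin n) (Fin m) ℝ)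
    (Q : Matrix (Fin m) (Fin m) ℝ) (hQ₂ : Q * Qᵀ = 1) :
    ip W X = ∑ j, ((W *ᵥ fun k => Q k j) ⬝ᵥ (X *ᵥ fun k => Q k j)) := by
  have hcol : ∀ (M : Matrix (Fin n) (Fin m) ℝ) (j : Fin m) (i : Fin n),
      (M *ᵥ fun k => Q k j) i = (M * Q) i j := by
    intro M j i; simp [Matrix.mulVec, Matrix.mul_apply, dotProduct]
  rw [← ip_mul_orth W X Q hQ₂, ip, Finset.sum_comm]
  apply Finset.sum_congr rfl
  intro j _
  simp only [dotProduct, hcol]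

lemma col_sq_one {q : ℕ} (Q : Matrix (Fin q) (Fin q) ℝ) (hQ₁ : Qᵀ * Q = 1) (j : Fin q) :
    ∑ k, (Q k j) ^ 2 = 1 := by
  have h : (Qᵀ * Q) j j = ∑ k, Q k j ^ 2 := by
    simp [Matrix.mul_apply, sq]
  rw [← h, hQ₁]
  simp

/-- Dual lower bound: if `W` is an `c`-contraction then `⟨W, X⟩ ≤ c‖X‖_*`. -/
lemma nuc_lb {n m : ℕ} (W X : Matrix (Fin n) (Fin m) ℝ) (c : ℝ) (hc : 0 ≤ c)
    (hW : ∀ v : Fin m → ℝ, l2 (W *ᵥ v) ≤ c * l2 v) : ip W X ≤ c * nucNorm X := by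
  have hA : (Xᵀ * X).IsHermitian := by simpa using Matrix.isHermitian_conjTranspose_mul_self X
  set Q : Matrix (Fin m) (Fin m) ℝ := (hA.eigenvectorUnitary : Matrix (Fin m) (Fin m) ℝ)
    with hQdef
  have hmem := hA.eigenvectorUnitary.2
  have hQ₁ : Qᵀ * Q = 1 := by rw [← star_eq_transpose]; exact hmem.1
  have hQ₂ : Q * Qᵀ = 1 := by rw [← star_eq_transpose]; exact hmem.2
  have heig : ∀ j, (Xᵀ * X) *ᵥ (fun k => Q k j) = hA.eigenvalues j • (fun k => Q k j) := by
    intro j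
    have h2 : (fun k => Q k j) = ⇑(hA.eigenvectorBasis j) := by
      funext k; exact hA.eigenvectorUnitary_apply k j
    rw [h2]
    exact hA.mulVec_eigenvectorBasis j
  have hq_norm : ∀ j, l2 (fun k => Q k j) = 1 := by
    intro j
    rw [l2, col_sq_one Q hQ₁ j, Real.sqrt_one]
  have hXq : ∀ j, l2 (X *ᵥ fun k => Q k j) = Real.sqrt (hA.eigenvalues j) := by
    intro j
    rw [l2]
    congr 1
    rw [← dot_self_sq, mulVec_self_dot, heig j, dotProduct_smul, smul_eq_mul,
      dot_self_sq, col_sq_one Q hQ₁ j, mul_one]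
  rw [ip_eq_sum_cols W X Q hQ₂, nucNorm, Finset.mul_sum]
  apply Finset.sum_le_sum
  intro j _
  calc (W *ᵥ fun k => Q k j) ⬝ᵥ (X *ᵥ fun k => Q k j)
      ≤ l2 (W *ᵥ fun k => Q k j) * l2 (X *ᵥ fun k => Q k j) := dot_le_l2 _ _
    _ ≤ (c * l2 fun k => Q k j) * l2 (X *ᵥ fun k => Q k j) :=
        mul_le_mul_of_nonneg_right (hW _) (l2_nonneg _)
    _ = c * Real.sqrt (hA.eigenvalues j) := by rw [hq_norm j, hXq j, mul_one]

/-- Dual upper bound for the nuclear norm of `U Sα Vᵀ`. -/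
lemma nuc_ub {n m : ℕ} (U : Matrix (Fin n) (Fin n) ℝ) (V : Matrix (Fin m) (Fin m) ℝ)
    (Sα : Matrix (Fin n) (Fin m) ℝ)
    (hU₁ : Uᵀ * U = 1) (hV₁ : Vᵀ * V = 1) (hV₂ : V * Vᵀ = 1)
    (hoff : ∀ (i : Fin n) (j : Fin m), (i : ℕ) ≠ (j : ℕ) → Sα i j = 0)
    (hpos : ∀ (i : Fin n) (j : Fin m), 0 ≤ Sα i j) :
    nucNorm (U * Sα * Vᵀ) ≤ ∑ i : Fin n, ∑ j : Fin m, (if (i : ℕ) = (j : ℕ) then Sα i j else 0) := by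
  classical
  set s : Fin m → ℝ := fun k => if h : (k : ℕ) < n then Sα ⟨k, h⟩ k else 0 with hs
  have hs_nonneg : ∀ k, 0 ≤ s k := by
    intro k; rw [hs]; dsimp only; split_ifs with h
    · exact hpos _ _
    · exact le_rfl
  have hSα_eq : ∀ (i : Fin n) (j : Fin m), Sα i j = if (i : ℕ) = (j : ℕ) then s j else 0 := by
    intro i j
    by_cases h : (i : ℕ) = (j : ℕ)
    · rw [if_pos h, hs]; dsimp only
      rw [dif_pos (h ▸ i.isLt)]
      congr 1
      exact Fin.ext h
    · rw [if_neg h]; exact hoff i j h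
  set d : Fin m → ℝ := fun k => if 0 < s k then 1 else 0 with hd
  have hd_nonneg : ∀ k, 0 ≤ d k := by
    intro k; rw [hd]; dsimp only; split_ifs <;> norm_num
  set D₁ : Matrix (Fin n) (Fin m) ℝ :=
    Matrix.of (fun i j => if (i : ℕ) = (j : ℕ) then d j else 0) with hD₁
  have hD₁app : ∀ (i : Fin n) (j : Fin m), D₁ i j = if (i : ℕ) = (j : ℕ) then d j else 0 :=
    fun i j => rfl
  have hA : ((U * Sα * Vᵀ)ᵀ * (U * Sα * Vᵀ)).IsHermitian := by
    simpa using Matrix.isHermitian_conjTranspose_mul_self (U * Sα * Vᵀ)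
  set Q : Matrix (Fin m) (Fin m) ℝ := (hA.eigenvectorUnitary : Matrix (Fin m) (Fin m) ℝ)
    with hQdef
  have hmem := hA.eigenvectorUnitary.2
  have hQ₁ : Qᵀ * Q = 1 := by rw [← star_eq_transpose]; exact hmem.1
  have hQ₂ : Q * Qᵀ = 1 := by rw [← star_eq_transpose]; exact hmem.2
  have heig : ∀ j, ((U * Sα * Vᵀ)ᵀ * (U * Sα * Vᵀ)) *ᵥ (fun k => Q k j)
      = hA.eigenvalues j • (fun k => Q k j) := by
    intro j
    have h2 : (fun k => Q k j) = ⇑(hA.eigenvectorBasis j) := by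
      funext k; exact hA.eigenvectorUnitary_apply k j
    rw [h2]
    exact hA.mulVec_eigenvectorBasis j
  have hXX : (U * Sα * Vᵀ)ᵀ * (U * Sα * Vᵀ) = V * (Sαᵀ * Sα) * Vᵀ := by
    simp only [Matrix.transpose_mul, Matrix.transpose_transpose]
    calc Vᵀᵀ * (Sαᵀ * Uᵀ) * (U * Sα * Vᵀ) = V * (Sαᵀ * ((Uᵀ * U) * (Sα * Vᵀ))) := by
          rw [Matrix.transpose_transpose]; simp only [Matrix.mul_assoc]
      _ = V * (Sαᵀ * Sα) * Vᵀ := by rw [hU₁, Matrix.one_mul]; simp only [Matrix.mul_assoc]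
  have hB : ∀ k l : Fin m, (Sαᵀ * Sα) k l = if k = l then (s k) ^ 2 else 0 := by
    intro k l
    by_cases hkl : k = l
    · subst hkl
      rw [if_pos rfl, Matrix.mul_apply]
      simp only [Matrix.transpose_apply]
      rw [show (∑ i, Sα i k * Sα i k)
          = ∑ i : Fin n, if (i : ℕ) = (k : ℕ) then Sα i k * Sα i k else 0 from
        Finset.sum_congr rfl fun i _ => by
          by_cases h : (i : ℕ) = (k : ℕ)
          · rw [if_pos h]
          · rw [if_neg h, hoff i k h, zero_mul]]
      rw [collapse₁ k (fun i => Sα i k * Sα i k), hs]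
      dsimp only
      split_ifs with h
      · ring
      · norm_num
    · rw [if_neg hkl, Matrix.mul_apply]
      apply Finset.sum_eq_zero
      intro i _
      simp only [Matrix.transpose_apply]
      by_cases hik : (i : ℕ) = (k : ℕ)
      · have hil : (i : ℕ) ≠ (l : ℕ) := by
          intro hc
          exact hkl (Fin.ext (hik.symm.trans hc))
        rw [hoff i l hil, mul_zero]
      · rw [hoff i k hik, zero_mul]
  have key : ∀ j : Fin m, Real.sqrt (hA.eigenvalues j)
      ≤ ((U * D₁ * Vᵀ) *ᵥ fun k => Q k j) ⬝ᵥ ((U * Sα * Vᵀ) *ᵥ fun k => Q k j) := by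
    intro j
    set q : Fin m → ℝ := fun k => Q k j with hq
    set w : Fin m → ℝ := Vᵀ *ᵥ q with hw
    set μ : ℝ := hA.eigenvalues j with hμ
    have hw1 : ∑ k, (w k) ^ 2 = 1 := by
      rw [← dot_self_sq, hw,
        dot_mulVec_orth Vᵀ (by rw [Matrix.transpose_transpose]; exact hV₂),
        dot_self_sq, col_sq_one Q hQ₁ j]
    have hBw : (Sαᵀ * Sα) *ᵥ w = μ • w := by
      have h0 := heig j
      rw [← hμ] at h0
      rw [hXX] at h0
      have h3 := congrArg (fun z => Vᵀ *ᵥ z) h0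
      rw [Matrix.mulVec_mulVec, Matrix.mulVec_smul] at h3
      rw [show Vᵀ * (V * (Sαᵀ * Sα) * Vᵀ) = (Sαᵀ * Sα) * Vᵀ by
        calc Vᵀ * (V * (Sαᵀ * Sα) * Vᵀ) = (Vᵀ * V) * ((Sαᵀ * Sα) * Vᵀ) := by
              simp only [Matrix.mul_assoc]
          _ = (Sαᵀ * Sα) * Vᵀ := by rw [hV₁, Matrix.one_mul]] at h3
      rw [← Matrix.mulVec_mulVec] at h3
      rw [hw]
      exact h3
    have hsw : ∀ k, (s k) ^ 2 * w k = μ * w k := by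
      intro k
      have h4 := congrFun hBw k
      rw [show ((Sαᵀ * Sα) *ᵥ w) k = ∑ l, (Sαᵀ * Sα) k l * w l from rfl] at h4
      simp only [hB, ite_mul, zero_mul, Finset.sum_ite_eq, Finset.mem_univ, if_pos] at h4
      simpa using h4
    have hRHS : ((U * D₁ * Vᵀ) *ᵥ q) ⬝ᵥ ((U * Sα * Vᵀ) *ᵥ q)
        = (D₁ *ᵥ w) ⬝ᵥ (Sα *ᵥ w) := by
      rw [show (U * D₁ * Vᵀ) *ᵥ q = U *ᵥ (D₁ *ᵥ (Vᵀ *ᵥ q)) by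
            rw [Matrix.mulVec_mulVec, Matrix.mulVec_mulVec],
          show (U * Sα * Vᵀ) *ᵥ q = U *ᵥ (Sα *ᵥ (Vᵀ *ᵥ q)) by
            rw [Matrix.mulVec_mulVec, Matrix.mulVec_mulVec],
          dot_mulVec_orth U hU₁, ← hw]
    have hD₁w : ∀ i : Fin n, (D₁ *ᵥ w) i
        = if h : (i : ℕ) < m then d ⟨i, h⟩ * w ⟨i, h⟩ else 0 := by
      intro i
      rw [show (D₁ *ᵥ w) i = ∑ l, D₁ i l * w l from rfl,
        ← collapse₂ i (fun l => d l * w l)]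
      apply Finset.sum_congr rfl
      intro l _
      rw [hD₁app]
      split_ifs with h
      · rfl
      · rw [zero_mul]
    have hSw : ∀ i : Fin n, (Sα *ᵥ w) i
        = if h : (i : ℕ) < m then s ⟨i, h⟩ * w ⟨i, h⟩ else 0 := by
      intro i
      rw [show (Sα *ᵥ w) i = ∑ l, Sα i l * w l from rfl,
        ← collapse₂ i (fun l => s l * w l)]
      apply Finset.sum_congr rfl
      intro l _
      rw [hSα_eq i l]
      split_ifs with h
      · rfl
      · rw [zero_mul]
    set g : ℕ → ℝ := fun x =>
      if h1 : x < m then (if x < n then d ⟨x, h1⟩ * s ⟨x, h1⟩ * (w ⟨x, h1⟩) ^ 2 else 0) else 0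
      with hgdef
    have hprod : ∀ i : Fin n, (D₁ *ᵥ w) i * (Sα *ᵥ w) i = g i := by
      intro i
      rw [hD₁w, hSw, hgdef]
      dsimp only
      split_ifs with h1 h2
      · ring
      · exact absurd i.isLt h2
      · rw [mul_zero]
    have hg0' : ∀ x, 0 ≤ g x := by
      intro x; rw [hgdef]; dsimp only
      split_ifs with h1 h2
      · exact mul_nonneg (mul_nonneg (hd_nonneg _) (hs_nonneg _)) (sq_nonneg _)
      · exact le_rfl
      · exact le_rfl
    have hgn : ∀ x, n ≤ x → g x = 0 := by
      intro x hx; rw [hgdef]; dsimp only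
      split_ifs with h1 h2
      · omega
      · rfl
      · rfl
    have hterm : ∀ k : Fin m, Real.sqrt μ * (w k) ^ 2 ≤ g k := by
      intro k
      have hgk : g ↑k = if (k : ℕ) < n then d k * s k * (w k) ^ 2 else 0 := by
        rw [hgdef]; dsimp only
        rw [dif_pos k.isLt]
      rw [hgk]
      by_cases hwk : w k = 0
      · rw [hwk]
        split_ifs <;> simp
      · have hsk2 : (s k) ^ 2 = μ := mul_right_cancel₀ hwk (hsw k)
        have hsknn := hs_nonneg k
        have hsqrt : Real.sqrt μ = s k := by rw [← hsk2, Real.sqrt_sq hsknn]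
        by_cases hsk0 : s k = 0
        · rw [hsqrt, hsk0]
          split_ifs <;> simp
        · have hskpos : 0 < s k := lt_of_le_of_ne hsknn (Ne.symm hsk0)
          have hkn : (k : ℕ) < n := by
            by_contra hc
            apply hsk0
            rw [hs]; dsimp only; rw [dif_neg hc]
          rw [if_pos hkn, hd]
          dsimp only
          rw [if_pos hskpos, one_mul, hsqrt]
    calc Real.sqrt μ = ∑ k : Fin m, Real.sqrt μ * (w k) ^ 2 := by
          rw [← Finset.mul_sum, hw1, mul_one]
      _ ≤ ∑ k : Fin m, g k := Finset.sum_le_sum fun k _ => hterm k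
      _ ≤ ∑ i : Fin n, g i := sum_fin_le g hg0' hgn
      _ = ∑ i, (D₁ *ᵥ w) i * (Sα *ᵥ w) i := Finset.sum_congr rfl fun i _ => (hprod i).symm
      _ = (D₁ *ᵥ w) ⬝ᵥ (Sα *ᵥ w) := rfl
      _ = ((U * D₁ * Vᵀ) *ᵥ q) ⬝ᵥ ((U * Sα * Vᵀ) *ᵥ q) := hRHS.symm
  calc nucNorm (U * Sα * Vᵀ) = ∑ j, Real.sqrt (hA.eigenvalues j) := rfl
    _ ≤ ∑ j, ((U * D₁ * Vᵀ) *ᵥ fun k => Q k j) ⬝ᵥ ((U * Sα * Vᵀ) *ᵥ fun k => Q k j) :=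
        Finset.sum_le_sum fun j _ => key j
    _ = ip (U * D₁ * Vᵀ) (U * Sα * Vᵀ) := (ip_eq_sum_cols _ _ Q hQ₂).symm
    _ = ip D₁ Sα := ip_conj D₁ Sα U V hU₁ hV₁
    _ = ∑ i : Fin n, ∑ j : Fin m, (if (i : ℕ) = (j : ℕ) then Sα i j else 0) := by
        rw [ip]
        apply Finset.sum_congr rfl
        intro i _
        apply Finset.sum_congr rfl
        intro j _
        rw [hD₁app]
        by_cases h : (i : ℕ) = (j : ℕ)
        · rw [if_pos h, if_pos h, hd]
          dsimp only
          by_cases hdj : 0 < s j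
          · rw [if_pos hdj, one_mul]
          · have h5 : Sα i j = s j := by rw [hSα_eq i j, if_pos h]
            have hsj : s j = 0 := le_antisymm (not_lt.1 hdj) (hs_nonneg j)
            rw [if_neg hdj, zero_mul, h5, hsj]
        · rw [if_neg h, if_neg h, zero_mul]

end SVTAux

namespace SVTAux

lemma frob_expand {n m : ℕ} (A B : Matrix (Fin n) (Fin m) ℝ) :
    frobNorm (A + B) ^ 2 = frobNorm A ^ 2 + 2 * ip A B + frobNorm B ^ 2 := by
  calc frobNorm (A + B) ^ 2 = ip (A + B) (A + B) := frob_sq _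
    _ = ∑ i, ∑ j, (A i j * A i j + (2 * (A i j * B i j) + B i j * B i j)) := by
        unfold ip
        exact Finset.sum_congr rfl fun i _ => Finset.sum_congr rfl fun j _ => by
          simp only [Matrix.add_apply]; ring
    _ = ip A A + (2 * ip A B + ip B B) := by
        unfold ip
        simp only [Finset.sum_add_distrib, Finset.mul_sum]
    _ = frobNorm A ^ 2 + 2 * ip A B + frobNorm B ^ 2 := by
        rw [frob_sq, frob_sq]; ring

lemma ip_self_pos {n m : ℕ} (C : Matrix (Fin n) (Fin m) ℝ) (hC : C ≠ 0) : 0 < ip C C := by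
  have hex : ∃ i j, C i j ≠ 0 := by
    by_contra hc
    push_neg at hc
    exact hC (by ext i j; simpa using hc i j)
  obtain ⟨i0, j0, hij⟩ := hex
  rw [ip]
  apply Finset.sum_pos'
  · intro i _
    exact Finset.sum_nonneg fun j _ => mul_self_nonneg _
  · exact ⟨i0, Finset.mem_univ _, Finset.sum_pos' (fun j _ => mul_self_nonneg _)
      ⟨j0, Finset.mem_univ _, mul_self_pos.2 hij⟩⟩

end SVTAux

open SVTAux

/-- Singular value thresholding: if `G = U Σ Vᵀ` is a singular value decomposition
(`U ∈ ℝ^{n×n}`, `V ∈ ℝ^{m×m}` orthogonal, `Σ ∈ ℝ^{n×m}` rectangular-diagonal with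
nonnegative diagonal entries `σ_i`), then for `α > 0` the matrix
`X* = U S_α(Σ) Vᵀ`, where `S_α(Σ)_{ii} = max(σ_i − α, 0)` and `S_α(Σ)_{ij} = 0` for
`i ≠ j`, is the unique global minimizer over `ℝ^{n×m}` of
`X ↦ (1/2)‖X − G‖_F² + α‖X‖_*`. -/
theorem svt_prox_nucNorm (n m : ℕ)
    (G Sig : Matrix (Fin n) (Fin m) ℝ)
    (U : Matrix (Fin n) (Fin n) ℝ) (V : Matrix (Fin m) (Fin m) ℝ)
    (hU₁ : Uᵀ * U = 1) (hU₂ : U * Uᵀ = 1)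
    (hV₁ : Vᵀ * V = 1) (hV₂ : V * Vᵀ = 1)
    (hoffdiag : ∀ (i : Fin n) (j : Fin m), (i : ℕ) ≠ (j : ℕ) → Sig i j = 0)
    (hnonneg : ∀ (i : Fin n) (j : Fin m), (i : ℕ) = (j : ℕ) → 0 ≤ Sig i j)
    (hG : G = U * Sig * Vᵀ)
    (α : ℝ) (hα : 0 < α)
    (Sα : Matrix (Fin n) (Fin m) ℝ)
    (hSα : Sα = Matrix.of fun (i : Fin n) (j : Fin m) =>
      if (i : ℕ) = (j : ℕ) then max (Sig i j - α) 0 else 0) :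
    ∀ X : Matrix (Fin n) (Fin m) ℝ, X ≠ U * Sα * Vᵀ →
      (1 / 2) * frobNorm (U * Sα * Vᵀ - G) ^ 2 + α * nucNorm (U * Sα * Vᵀ) <
        (1 / 2) * frobNorm (X - G) ^ 2 + α * nucNorm X := by
  intro X hX
  have hSαe : ∀ (i : Fin n) (j : Fin m), Sα i j
      = if (i : ℕ) = (j : ℕ) then max (Sig i j - α) 0 else 0 := by
    intro i j; rw [hSα]; rfl
  have hSα_off : ∀ (i : Fin n) (j : Fin m), (i : ℕ) ≠ (j : ℕ) → Sα i j = 0 := by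
    intro i j h; rw [hSαe, if_neg h]
  have hSα_pos : ∀ (i : Fin n) (j : Fin m), 0 ≤ Sα i j := by
    intro i j; rw [hSαe]; split_ifs
    · exact le_max_right _ _
    · exact le_rfl
  set T : ℝ := ∑ i : Fin n, ∑ j : Fin m, (if (i : ℕ) = (j : ℕ) then Sα i j else 0) with hT
  have hGXs : G - U * Sα * Vᵀ = U * (Sig - Sα) * Vᵀ := by
    rw [hG, show U * (Sig - Sα) * Vᵀ = U * Sig * Vᵀ - U * Sα * Vᵀ by
      rw [Matrix.mul_sub, Matrix.sub_mul]]
  have hMoff : ∀ (i : Fin n) (j : Fin m), (i : ℕ) ≠ (j : ℕ) → (Sig - Sα) i j = 0 := by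
    intro i j h
    simp [Matrix.sub_apply, hoffdiag i j h, hSα_off i j h]
  have hMbd : ∀ (i : Fin n) (j : Fin m), (i : ℕ) = (j : ℕ) → ((Sig - Sα) i j) ^ 2 ≤ α ^ 2 := by
    intro i j h
    have hσ := hnonneg i j h
    have hsij : Sα i j = max (Sig i j - α) 0 := by rw [hSαe, if_pos h]
    rw [Matrix.sub_apply, hsij]
    rcases le_total (Sig i j) α with hc | hc
    · rw [max_eq_right (by linarith), sub_zero]
      apply sq_le_sq' <;> linarith
    · rw [max_eq_left (by linarith), show Sig i j - (Sig i j - α) = α by ring]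
  have hcontr : ∀ v : Fin m → ℝ, l2 ((G - U * Sα * Vᵀ) *ᵥ v) ≤ α * l2 v := by
    intro v
    rw [hGXs, show (U * (Sig - Sα) * Vᵀ) *ᵥ v = U *ᵥ ((Sig - Sα) *ᵥ (Vᵀ *ᵥ v)) by
      rw [Matrix.mulVec_mulVec, Matrix.mulVec_mulVec]]
    rw [l2_mulVec_orth U hU₁]
    calc l2 ((Sig - Sα) *ᵥ (Vᵀ *ᵥ v)) ≤ α * l2 (Vᵀ *ᵥ v) :=
          diagish_contract _ α hα.le hMoff hMbd _
      _ = α * l2 v := by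
          rw [l2_mulVec_orth Vᵀ (by rw [Matrix.transpose_transpose]; exact hV₂)]
  have h1 : ip (G - U * Sα * Vᵀ) X ≤ α * nucNorm X := nuc_lb _ X α hα.le hcontr
  have h2 : ip (G - U * Sα * Vᵀ) (U * Sα * Vᵀ) = α * T := by
    rw [hGXs, ip_conj _ _ U V hU₁ hV₁, hT, Finset.mul_sum]
    apply Finset.sum_congr rfl; intro i _
    rw [Finset.mul_sum]
    apply Finset.sum_congr rfl; intro j _
    by_cases h : (i : ℕ) = (j : ℕ)
    · have hsij : Sα i j = max (Sig i j - α) 0 := by rw [hSαe, if_pos h]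
      rw [if_pos h, Matrix.sub_apply, hsij]
      have hσ := hnonneg i j h
      rcases le_total (Sig i j) α with hc | hc
      · rw [max_eq_right (by linarith)]; simp
      · rw [max_eq_left (by linarith)]; ring
    · rw [if_neg h, Matrix.sub_apply, hSα_off i j h]; simp
  have h3 : α * nucNorm (U * Sα * Vᵀ) ≤ α * T :=
    mul_le_mul_of_nonneg_left (nuc_ub U V Sα hU₁ hV₁ hV₂ hSα_off hSα_pos) hα.le
  have h4 : ip (X - U * Sα * Vᵀ) (U * Sα * Vᵀ - G)
      = ip (G - U * Sα * Vᵀ) (U * Sα * Vᵀ) - ip (G - U * Sα * Vᵀ) X := by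
    rw [ip, ip, ip, ← Finset.sum_sub_distrib]
    apply Finset.sum_congr rfl; intro i _
    rw [← Finset.sum_sub_distrib]
    apply Finset.sum_congr rfl; intro j _
    simp only [Matrix.sub_apply]
    ring
  have h5 : 0 < frobNorm (X - U * Sα * Vᵀ) ^ 2 := by
    rw [frob_sq]
    exact ip_self_pos _ (sub_ne_zero.2 hX)
  have e1 : frobNorm (X - G) ^ 2
      = frobNorm (X - U * Sα * Vᵀ) ^ 2 + 2 * ip (X - U * Sα * Vᵀ) (U * Sα * Vᵀ - G)
        + frobNorm (U * Sα * Vᵀ - G) ^ 2 := by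
    rw [show X - G = (X - U * Sα * Vᵀ) + (U * Sα * Vᵀ - G) from by abel]
    exact frob_expand _ _
  rw [e1]
  linarith [h1, h2, h3, h4, h5]
end
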